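/- Prime factorizations of finite connected digraphs with an unlooped vertex are unique up to order and isomorphism of the factors: if G is a finite connected digraph with loops having at least one unlooped vertex, and G ≅ ∏_{i∈Fin k} G_i and G ≅ ∏_{j∈Fin l} H_j where all G_i and all H_j are prime digraphs, then k = l and there is a permutation σ of Fin k with G_i ≅ H_{σ(i)} for every i. -/

import Mathlib

universe u

namespace Digraph

/-- Cartesian product of two digraphs. -/
def boxProd {α β : Type*} (G : Digraph α) (H : Digraph β) : Digraph (α × β) where
  Adj p q := (G.Adj p.1 q.1 ∧ p.2 = q.2) ∨ (p.1 = q.1 ∧ H.Adj p.2 q.2)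

/-- Cartesian product of a family of digraphs. -/
def prodFam {I : Type*} {V : I → Type*} (G : ∀ i, Digraph (V i)) : Digraph (∀ i, V i) where
  Adj u v := ∃ κ, (G κ).Adj (u κ) (v κ) ∧ ∀ i, i ≠ κ → u i = v i

/-- The shadow of a digraph: distinct vertices are adjacent iff there is an arc between them
in some direction. -/
def shadow {α : Type*} (G : Digraph α) : SimpleGraph α where
  Adj a b := a ≠ b ∧ (G.Adj a b ∨ G.Adj b a)
  symm := by
    constructor
    rintro a b ⟨hab, h⟩
    exact ⟨hab.symm, h.symm⟩
  loopless := by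
    constructor
    rintro a ⟨ha, -⟩
    exact ha rfl

/-- A digraph is connected if its shadow is connected. -/
def Connected {α : Type*} (G : Digraph α) : Prop := G.shadow.Connected

/-- Isomorphisms of digraphs. -/
abbrev Iso {α β : Type*} (G : Digraph α) (H : Digraph β) := RelIso G.Adj H.Adj

/-- A digraph is prime w.r.t. the Cartesian product if it is nontrivial, connected, has an
unlooped vertex, and in every representation as a product of two digraphs one factor
has exactly one vertex. -/
def IsPrime {α : Type u} (G : Digraph α) : Prop :=
  G.Connected ∧ Nontrivial α ∧ (∃ v, ¬ G.Adj v v) ∧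
    ∀ {A B : Type u} (GA : Digraph A) (GB : Digraph B),
      Nonempty (G.Iso (GA.boxProd GB)) →
        (Nonempty A ∧ Subsingleton A) ∨ (Nonempty B ∧ Subsingleton B)

/-- The vertex set of the connected component of `a` in the shadow of the product. -/
def weakComponent {I : Type*} {V : I → Type*} (G : ∀ i, Digraph (V i)) (a : ∀ i, V i) :
    Set (∀ i, V i) :=
  {v | (prodFam G).shadow.Reachable a v}

/-- The weak Cartesian product: the induced subdigraph of the Cartesian product on the
connected component (in the shadow) of the vertex `a`. -/
def weakProd {I : Type*} {V : I → Type*} (G : ∀ i, Digraph (V i)) (a : ∀ i, V i) :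
    Digraph (weakComponent G a) where
  Adj u v := (prodFam G).Adj u.1 v.1

end Digraph

namespace Digraph

open Function SimpleGraph

section walks

variable {I : Type*} [DecidableEq I] {X : I → Type*} {K : ∀ i, Digraph (X i)}

lemma shadow_adj {α : Type*} {G : Digraph α} {a b : α} :
    G.shadow.Adj a b ↔ a ≠ b ∧ (G.Adj a b ∨ G.Adj b a) := Iff.rfl

lemma prodFam_adj {u v : ∀ i, X i} :
    (prodFam K).Adj u v ↔ ∃ κ, (K κ).Adj (u κ) (v κ) ∧ ∀ i, i ≠ κ → u i = v i := Iff.rfl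

lemma shadow_prodFam_adj {u v : ∀ i, X i} :
    (prodFam K).shadow.Adj u v ↔
      ∃ κ, (K κ).shadow.Adj (u κ) (v κ) ∧ ∀ j, j ≠ κ → u j = v j := by
  constructor
  · rintro ⟨hne, h | h⟩ <;> obtain ⟨κ, hκ, he⟩ := h
    · refine ⟨κ, ⟨?_, Or.inl hκ⟩, he⟩
      intro h
      exact hne (funext fun j => by
        by_cases hj : j = κ
        · subst hj; exact h
        · exact he j hj)
    · refine ⟨κ, ⟨?_, Or.inr hκ⟩, fun j hj => (he j hj).symm⟩
      intro h
      exact hne (funext fun j => by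
        by_cases hj : j = κ
        · subst hj; exact h
        · exact (he j hj).symm)
  · rintro ⟨κ, ⟨hne, h | h⟩, he⟩
    · exact ⟨fun h' => hne (congrFun h' κ), Or.inl ⟨κ, h, he⟩⟩
    · exact ⟨fun h' => hne (congrFun h' κ), Or.inr ⟨κ, h, fun j hj => (he j hj).symm⟩⟩

lemma exists_walk_update {j : I} {x y : X j} (p : (K j).shadow.Walk x y) :
    ∀ (u : ∀ i, X i), u j = x →
      ∃ q : (prodFam K).shadow.Walk u (Function.update u j y), q.length = p.length := by
  induction p with
  | @nil z =>
    intro u hu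
    have he : u = Function.update u j z := by rw [← hu, Function.update_eq_self]
    exact ⟨SimpleGraph.Walk.nil.copy rfl he, by simp⟩
  | @cons x c y h p ih =>
    intro u hu
    have hadj : (prodFam K).shadow.Adj u (Function.update u j c) := by
      refine shadow_prodFam_adj.mpr ⟨j, ?_, fun t ht => (Function.update_of_ne ht _ _).symm⟩
      simpa [hu] using h
    obtain ⟨q, hq⟩ := ih (Function.update u j c) (Function.update_self _ _ _)
    refine ⟨SimpleGraph.Walk.cons hadj (q.copy rfl (by rw [Function.update_idem])), by simp [hq]⟩

variable [Fintype I]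

lemma exists_walk_le_sum' (hc : ∀ i, (K i).shadow.Connected) (s : Finset I) :
    ∀ u v : ∀ i, X i, (∀ i ∉ s, u i = v i) →
      ∃ q : (prodFam K).shadow.Walk u v,
        q.length ≤ ∑ i ∈ s, (K i).shadow.dist (u i) (v i) := by
  classical
  induction s using Finset.induction with
  | empty =>
    intro u v h
    exact ⟨SimpleGraph.Walk.nil.copy rfl (funext fun i => h i (by simp)), by simp⟩
  | @insert j s hjs ih =>
    intro u v h
    obtain ⟨p, hp⟩ := ((hc j) (u j) (v j)).exists_walk_length_eq_dist
    obtain ⟨q₁, hq₁⟩ := exists_walk_update p u rfl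
    obtain ⟨q₂, hq₂⟩ := ih (Function.update u j (v j)) v (fun i hi => by
      rcases eq_or_ne i j with rfl | hij
      · exact Function.update_self _ _ _
      · rw [Function.update_of_ne hij]
        exact h i (by simp [hi, hij]))
    refine ⟨q₁.append q₂, ?_⟩
    rw [SimpleGraph.Walk.length_append, Finset.sum_insert hjs]
    have hsum : ∑ i ∈ s, (K i).shadow.dist (Function.update u j (v j) i) (v i)
        = ∑ i ∈ s, (K i).shadow.dist (u i) (v i) := by
      refine Finset.sum_congr rfl fun i hi => ?_
      rw [Function.update_of_ne (by rintro rfl; exact hjs hi)]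
    omega
    
lemma exists_walk_le_sum (hc : ∀ i, (K i).shadow.Connected) (u v : ∀ i, X i) :
    ∃ q : (prodFam K).shadow.Walk u v,
      q.length ≤ ∑ i, (K i).shadow.dist (u i) (v i) :=
  exists_walk_le_sum' hc Finset.univ u v (fun i hi => absurd (Finset.mem_univ i) hi)

lemma sum_dist_le_length (hc : ∀ i, (K i).shadow.Connected)
    {u v : ∀ i, X i} (q : (prodFam K).shadow.Walk u v) :
    ∑ i, (K i).shadow.dist (u i) (v i) ≤ q.length := by
  induction q with
  | nil => simp
  | @cons u w v h q ih =>
    obtain ⟨κ, hκ, he⟩ := shadow_prodFam_adj.mp h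
    have step : ∀ i, (K i).shadow.dist (u i) (v i)
        ≤ (K i).shadow.dist (w i) (v i) + (if i = κ then 1 else 0) := by
      intro i
      rcases eq_or_ne i κ with rfl | hi
      · rw [if_pos rfl]
        have tri : (K i).shadow.dist (u i) (v i)
            ≤ (K i).shadow.dist (u i) (w i) + (K i).shadow.dist (w i) (v i) :=
          (hc i).dist_triangle
        have h1 : (K i).shadow.dist (u i) (w i) ≤ 1 := by
          have := SimpleGraph.dist_le (SimpleGraph.Walk.cons hκ SimpleGraph.Walk.nil)
          simpa using this
        omega
      · rw [he i hi]
        simp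
    calc ∑ i, (K i).shadow.dist (u i) (v i)
        ≤ ∑ i, ((K i).shadow.dist (w i) (v i) + (if i = κ then 1 else 0)) :=
          Finset.sum_le_sum fun i _ => step i
      _ = (∑ i, (K i).shadow.dist (w i) (v i)) + 1 := by
          rw [Finset.sum_add_distrib, Finset.sum_ite_eq' Finset.univ κ (fun _ => 1)]
          simp
      _ ≤ q.length + 1 := by omega
      _ = (SimpleGraph.Walk.cons h q).length := by simp

lemma reachable_prodFam (hc : ∀ i, (K i).shadow.Connected) (u v : ∀ i, X i) :
    (prodFam K).shadow.Reachable u v :=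
  ⟨(exists_walk_le_sum hc u v).choose⟩

lemma dist_prodFam (hc : ∀ i, (K i).shadow.Connected) (u v : ∀ i, X i) :
    (prodFam K).shadow.dist u v = ∑ i, (K i).shadow.dist (u i) (v i) := by
  obtain ⟨q, hq⟩ := exists_walk_le_sum hc u v
  refine le_antisymm ((SimpleGraph.dist_le q).trans hq) ?_
  have hr : (prodFam K).shadow.Reachable u v := ⟨q⟩
  obtain ⟨p, hp⟩ := hr.exists_walk_length_eq_dist
  rw [← hp]
  exact sum_dist_le_length hc p

end walks

section isos

variable {α β : Type*}

/-- A digraph isomorphism induces an isomorphism of shadows. -/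
def shadowIso {G : Digraph α} {H : Digraph β} (φ : G.Iso H) : G.shadow ≃g H.shadow where
  toEquiv := φ.toEquiv
  map_rel_iff' := by
    intro x y
    constructor
    · rintro ⟨hne, h⟩
      refine ⟨fun e => hne (by rw [e]), ?_⟩
      rcases h with h | h
      · exact Or.inl (φ.map_rel_iff.mp h)
      · exact Or.inr (φ.map_rel_iff.mp h)
    · rintro ⟨hne, h⟩
      refine ⟨φ.toEquiv.injective.ne hne, ?_⟩
      rcases h with h | h
      · exact Or.inl (φ.map_rel_iff.mpr h)
      · exact Or.inr (φ.map_rel_iff.mpr h)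

lemma iso_dist_le {A : SimpleGraph α} {B : SimpleGraph β} (f : A ≃g B) (u v : α) :
    B.dist (f u) (f v) ≤ A.dist u v := by
  by_cases h : A.Reachable u v
  · obtain ⟨p, hp⟩ := h.exists_walk_length_eq_dist
    calc B.dist (f u) (f v) ≤ (p.map f.toHom).length := SimpleGraph.dist_le _
      _ = A.dist u v := by rw [SimpleGraph.Walk.length_map, hp]
  · have hB : ¬ B.Reachable (f u) (f v) := fun hr => by
      have := hr.map f.symm.toHom
      simp only [SimpleGraph.Iso.symm] at this
      exact h (by simpa using this)
    simp [SimpleGraph.dist_eq_zero_of_not_reachable h,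
      SimpleGraph.dist_eq_zero_of_not_reachable hB]

lemma iso_dist {A : SimpleGraph α} {B : SimpleGraph β} (f : A ≃g B) (u v : α) :
    B.dist (f u) (f v) = A.dist u v := by
  refine le_antisymm (iso_dist_le f u v) ?_
  have := iso_dist_le f.symm (f u) (f v)
  simpa using this

end isos

end Digraph
namespace Digraph

open Function SimpleGraph

section geo

/-- Restriction of a digraph to a set of vertices. -/
def restrict {α : Type u} (G : Digraph α) (s : Set α) : Digraph s where
  Adj x y := G.Adj x.1 y.1

lemma unlooped_coord {I : Type*} {X : I → Type*} {K : ∀ i, Digraph (X i)} {a : ∀ i, X i}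
    (ha : ¬ (prodFam K).Adj a a) (i : I) : ¬ (K i).Adj (a i) (a i) :=
  fun h => ha ⟨i, h, fun _ _ => rfl⟩

lemma prodFam_adj_coord {I : Type*} {X : I → Type*} {K : ∀ i, Digraph (X i)}
    {c u v : ∀ i, X i} {j₀ : I}
    (hc : ∀ j, ¬ (K j).Adj (c j) (c j))
    (hu : ∀ j, j ≠ j₀ → u j = c j) (hv : ∀ j, j ≠ j₀ → v j = c j) :
    (prodFam K).Adj u v ↔ (K j₀).Adj (u j₀) (v j₀) := by
  constructor
  · rintro ⟨κ, hκ, he⟩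
    rcases eq_or_ne κ j₀ with rfl | hne
    · exact hκ
    · rw [hu κ hne, hv κ hne] at hκ
      exact absurd hκ (hc κ)
  · intro h
    exact ⟨j₀, h, fun j hj => (hu j hj).trans (hv j hj).symm⟩

/-- Splitting off one coordinate of a product of digraphs. -/
def prodFamSplit {I : Type*} [DecidableEq I] {X : I → Type*} (K : ∀ i, Digraph (X i)) (j : I) :
    (prodFam K).Iso ((K j).boxProd (prodFam fun t : {t : I // t ≠ j} => K t)) where
  toEquiv := Equiv.piSplitAt j X
  map_rel_iff' := by
    intro u v
    show (boxProd _ _).Adj (Equiv.piSplitAt j X u) (Equiv.piSplitAt j X v) ↔ _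
    simp only [Equiv.piSplitAt_apply]
    constructor
    · rintro (⟨h, he⟩ | ⟨he, ⟨τ, hτ, ht⟩⟩)
      · exact ⟨j, h, fun t hts => congrFun he ⟨t, hts⟩⟩
      · refine ⟨τ.1, hτ, fun t hts => ?_⟩
        rcases eq_or_ne t j with rfl | htj
        · exact he
        · exact ht ⟨t, htj⟩ (fun hh => hts (congrArg Subtype.val hh))
    · rintro ⟨κ, hκ, he⟩
      rcases eq_or_ne κ j with rfl | hne
      · exact Or.inl ⟨hκ, funext fun t => he t.1 t.2⟩
      · exact Or.inr ⟨he j (Ne.symm hne),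
          ⟨⟨κ, hne⟩, hκ, fun t ht => he t.1 (fun hh => ht (Subtype.ext hh))⟩⟩

variable {k l : ℕ} {W : Fin k → Type u} {X : Fin l → Type u}

/-- Each layer (through an unlooped vertex) of one factorization maps into a single layer of
the other factorization. -/
lemma exists_layer_map
    (Gs : ∀ i, Digraph (W i)) (Hs : ∀ j, Digraph (X j))
    (hGs : ∀ i, (Gs i).IsPrime) (hHsc : ∀ j, (Hs j).shadow.Connected)
    (Φ : (prodFam Gs).Iso (prodFam Hs))
    (a : ∀ i, W i) (ha : ∀ i, ¬ (Gs i).Adj (a i) (a i)) (i : Fin k) :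
    ∃ j : Fin l, ∀ x : W i, ∀ j', j' ≠ j → Φ (Function.update a i x) j' = Φ a j' := by
  classical
  have hGsc : ∀ i', (Gs i').shadow.Connected := fun i' => (hGs i').1
  set ε : W i → ∀ j, X j := fun x => Φ (Function.update a i x) with hε
  have hεa : ε (a i) = Φ a := by rw [hε]; simp only [Function.update_eq_self]
  have hεinj : Function.Injective ε := by
    intro x y hxy
    have h2 := Φ.toEquiv.injective hxy
    have h3 := congrFun h2 i
    simpa using h3
  -- adjacency transfer through ε
  have hadj : ∀ x y, (Gs i).Adj x y ↔ (prodFam Hs).Adj (ε x) (ε y) := by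
    intro x y
    rw [hε]
    rw [show (prodFam Hs).Adj (Φ (Function.update a i x)) (Φ (Function.update a i y)) ↔
        (prodFam Gs).Adj (Function.update a i x) (Function.update a i y) from Φ.map_rel_iff]
    have h1 := prodFam_adj_coord (K := Gs) (c := a) (j₀ := i)
      (u := Function.update a i x) (v := Function.update a i y) ha
      (fun t ht => Function.update_of_ne ht _ _) (fun t ht => Function.update_of_ne ht _ _)
    simp only [Function.update_self] at h1
    exact h1.symm
  -- distance transfer
  have hdist : ∀ u v : ∀ i', W i',
      (prodFam Hs).shadow.dist (Φ u) (Φ v) = (prodFam Gs).shadow.dist u v :=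
    fun u v => iso_dist (shadowIso Φ) u v
  -- replacement lemma: the image of the layer is closed under coordinate replacement
  have repl : ∀ x y : W i, ∀ j : Fin l, ∃ z, ε z = Function.update (ε x) j (ε y j) := by
    intro x y j
    have hm_off : ∀ j', j' ≠ j → Function.update (ε x) j (ε y j) j' = ε x j' :=
      fun j' hj' => Function.update_of_ne hj' _ _
    set m := Function.update (ε x) j (ε y j) with hm
    have key : ∀ j', (Hs j').shadow.dist (ε x j') (m j') + (Hs j').shadow.dist (m j') (ε y j')
        = (Hs j').shadow.dist (ε x j') (ε y j') := by
      intro j'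
      rcases eq_or_ne j' j with rfl | hj'
      · rw [hm]; simp
      · rw [hm_off j' hj']; simp
    have hsum : (prodFam Hs).shadow.dist (ε x) m + (prodFam Hs).shadow.dist m (ε y)
        = (prodFam Hs).shadow.dist (ε x) (ε y) := by
      rw [dist_prodFam hHsc, dist_prodFam hHsc, dist_prodFam hHsc, ← Finset.sum_add_distrib]
      exact Finset.sum_congr rfl fun j' _ => key j'
    set m' := Φ.symm m with hm'
    have hΦm' : Φ m' = m := Φ.apply_symm_apply m
    have hsum' : (prodFam Gs).shadow.dist (Function.update a i x) m'
        + (prodFam Gs).shadow.dist m' (Function.update a i y)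
        = (prodFam Gs).shadow.dist (Function.update a i x) (Function.update a i y) := by
      rw [← hdist (Function.update a i x) m', ← hdist m' (Function.update a i y),
        ← hdist (Function.update a i x) (Function.update a i y), hΦm']
      exact hsum
    have keyG : ∀ t, t ≠ i → m' t = a t := by
      intro t ht
      have tri : ∀ t', (Gs t').shadow.dist (Function.update a i x t') (Function.update a i y t')
          ≤ (Gs t').shadow.dist (Function.update a i x t') (m' t')
            + (Gs t').shadow.dist (m' t') (Function.update a i y t') :=
        fun t' => (hGsc t').dist_triangle
      have hsG : ∑ t', ((Gs t').shadow.dist (Function.update a i x t') (m' t')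
            + (Gs t').shadow.dist (m' t') (Function.update a i y t'))
          = ∑ t', (Gs t').shadow.dist (Function.update a i x t') (Function.update a i y t') := by
        rw [Finset.sum_add_distrib, ← dist_prodFam hGsc, ← dist_prodFam hGsc,
          ← dist_prodFam hGsc]
        exact hsum'
      have hpt : (Gs t).shadow.dist (Function.update a i x t) (m' t)
          + (Gs t).shadow.dist (m' t) (Function.update a i y t)
          = (Gs t).shadow.dist (Function.update a i x t) (Function.update a i y t) := by
        by_contra hne
        have hlt : (Gs t).shadow.dist (Function.update a i x t) (Function.update a i y t)
            < (Gs t).shadow.dist (Function.update a i x t) (m' t)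
              + (Gs t).shadow.dist (m' t) (Function.update a i y t) :=
          lt_of_le_of_ne (tri t) (Ne.symm hne)
        have hstrict := Finset.sum_lt_sum (fun t' _ => tri t') ⟨t, Finset.mem_univ t, hlt⟩
        omega
      have hUW : (Gs t).shadow.dist (Function.update a i x t) (Function.update a i y t) = 0 := by
        rw [Function.update_of_ne ht, Function.update_of_ne ht]
        exact SimpleGraph.dist_self
      have h0 : (Gs t).shadow.dist (Function.update a i x t) (m' t) = 0 := by omega
      have := ((hGsc t).dist_eq_zero_iff).mp h0
      rw [Function.update_of_ne ht] at this
      exact this.symm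
    refine ⟨m' i, ?_⟩
    have hupd : Function.update a i (m' i) = m' := by
      funext t
      rcases eq_or_ne t i with rfl | ht
      · rw [Function.update_self]
      · rw [Function.update_of_ne ht]
        exact (keyG t ht).symm
    rw [hε]
    show Φ (Function.update a i (m' i)) = m
    rw [hupd, hΦm']
  -- box lemma
  have box : ∀ c : ∀ j, X j, (∀ j, ∃ x, ε x j = c j) → ∃ x, ε x = c := by
    intro c hc
    suffices h : ∀ s : Finset (Fin l), ∃ x, ∀ j ∈ s, ε x j = c j by
      obtain ⟨x, hx⟩ := h Finset.univ
      exact ⟨x, funext fun j => hx j (Finset.mem_univ j)⟩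
    intro s
    induction s using Finset.induction with
    | empty => exact ⟨a i, by simp⟩
    | @insert j s hjs ih =>
      obtain ⟨x, hx⟩ := ih
      obtain ⟨y, hy⟩ := hc j
      obtain ⟨z, hz⟩ := repl x y j
      refine ⟨z, fun j' hj' => ?_⟩
      rcases eq_or_ne j' j with rfl | hne
      · rw [hz, Function.update_self, hy]
      · rw [hz, Function.update_of_ne hne]
        exact hx j' (Finset.mem_of_mem_insert_of_ne hj' hne)
  -- the coordinate projections of the image of the layer
  set S : ∀ j, Set (X j) := fun j => Set.range (fun x => ε x j) with hS
  have hbij : Function.Bijective (fun (x : W i) (j : Fin l) => (⟨ε x j, ⟨x, rfl⟩⟩ : S j)) := by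
    constructor
    · intro x y hxy
      apply hεinj
      funext j
      exact congrArg Subtype.val (congrFun hxy j)
    · intro f
      obtain ⟨x, hx⟩ := box (fun j => (f j).1) (fun j => (f j).2)
      exact ⟨x, funext fun j => Subtype.ext (congrFun hx j)⟩
  let e3 : W i ≃ ∀ j, S j := Equiv.ofBijective _ hbij
  -- at most one coordinate is nontrivial
  have huniq : ∀ j j'', j ≠ j'' → Nontrivial (S j) → Nontrivial (S j'') → False := by
    intro j j'' hne hj hj''
    have hDadj : ∀ x y : W i, (Gs i).Adj x y ↔
        (prodFam fun j => (Hs j).restrict (S j)).Adj (e3 x) (e3 y) := by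
      intro x y
      rw [hadj x y]
      constructor
      · rintro ⟨κ, hκ, he⟩
        exact ⟨κ, hκ, fun t ht => Subtype.ext (he t ht)⟩
      · rintro ⟨κ, hκ, he⟩
        exact ⟨κ, hκ, fun t ht => congrArg Subtype.val (he t ht)⟩
    let iso1 : (Gs i).Iso (prodFam fun j => (Hs j).restrict (S j)) :=
      ⟨e3, by intro x y; exact (hDadj x y).symm⟩
    let iso2 := prodFamSplit (fun j => (Hs j).restrict (S j)) j
    rcases (hGs i).2.2.2 _ _ ⟨iso1.trans iso2⟩ with ⟨_, hsub⟩ | ⟨_, hsub⟩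
    · exact (not_subsingleton_iff_nontrivial.mpr hj) hsub
    · obtain ⟨y1, y2, hy⟩ := hj''
      have f0 : ∀ t : {t : Fin l // t ≠ j}, S t.1 := fun t => ⟨ε (a i) t.1, ⟨a i, rfl⟩⟩
      have hup := congrFun (hsub.elim (Function.update f0 ⟨j'', Ne.symm hne⟩ y1)
        (Function.update f0 ⟨j'', Ne.symm hne⟩ y2)) ⟨j'', Ne.symm hne⟩
      rw [Function.update_self, Function.update_self] at hup
      exact hy hup
  have hex : ∃ j, Nontrivial (S j) := by
    by_contra h
    push_neg at h
    have hsub : ∀ j, Subsingleton (S j) := fun j => h j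
    have : Subsingleton (∀ j, S j) := ⟨fun f g => funext fun j => (hsub j).elim _ _⟩
    have : Subsingleton (W i) := e3.subsingleton
    exact (not_subsingleton_iff_nontrivial.mpr (hGs i).2.1) this
  obtain ⟨j, hjnt⟩ := hex
  refine ⟨j, fun x j' hj' => ?_⟩
  have hsub : Subsingleton (S j') := by
    by_contra hns
    exact huniq j j' (Ne.symm hj') hjnt (not_subsingleton_iff_nontrivial.mp hns)
  have h1 : (⟨ε x j', ⟨x, rfl⟩⟩ : S j') = ⟨Φ a j', ⟨a i, congrFun hεa j'⟩⟩ :=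
    hsub.elim _ _
  exact congrArg Subtype.val h1

end geo

end Digraph
/-- Uniqueness of prime factorization for finite connected digraphs with an unlooped
vertex: two prime factorizations have the same number of factors and the factors agree
up to a permutation and isomorphism. -/
theorem prime_factorization_unique {V : Type u} [Fintype V] (G : Digraph V)
    (hconn : G.Connected) (hul : ∃ v, ¬ G.Adj v v)
    {k l : ℕ} {W : Fin k → Type u} {X : Fin l → Type u}
    (Gs : ∀ i, Digraph (W i)) (Hs : ∀ j, Digraph (X j))
    (hGs : ∀ i, (Gs i).IsPrime) (hHs : ∀ j, (Hs j).IsPrime)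
    (h₁ : Nonempty (G.Iso (Digraph.prodFam Gs)))
    (h₂ : Nonempty (G.Iso (Digraph.prodFam Hs))) :
    ∃ h : k = l, ∃ σ : Equiv.Perm (Fin k),
      ∀ i, Nonempty ((Gs i).Iso (Hs (Fin.cast h (σ i)))) := by
  classical
  obtain ⟨v₀, hv₀⟩ := hul
  obtain ⟨e₁⟩ := h₁
  obtain ⟨e₂⟩ := h₂
  set a : ∀ i, W i := e₁ v₀ with hadef
  have haG : ¬ (Digraph.prodFam Gs).Adj a a := fun h => hv₀ (e₁.map_rel_iff.mp h)
  have ha : ∀ i, ¬ (Gs i).Adj (a i) (a i) := Digraph.unlooped_coord haG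
  set Φ : (Digraph.prodFam Gs).Iso (Digraph.prodFam Hs) := e₁.symm.trans e₂ with hΦdef
  have hbH : ¬ (Digraph.prodFam Hs).Adj (Φ a) (Φ a) := fun h => haG (Φ.map_rel_iff.mp h)
  have hb : ∀ j, ¬ (Hs j).Adj (Φ a j) (Φ a j) := Digraph.unlooped_coord hbH
  have hGsc : ∀ i, (Gs i).shadow.Connected := fun i => (hGs i).1
  have hHsc : ∀ j, (Hs j).shadow.Connected := fun j => (hHs j).1
  have hΦsb : Φ.symm (Φ a) = a := Φ.symm_apply_apply a
  choose f hf using fun i =>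
    Digraph.exists_layer_map Gs Hs hGs hHsc Φ a ha i
  choose g hg using fun j =>
    Digraph.exists_layer_map Hs Gs hHs hGsc Φ.symm (Φ a) hb j
  -- hg's conclusions are about Φ.symm (update (Φ a) j y)
  have hg' : ∀ j (y : X j) (i' : Fin k), i' ≠ g j →
      Φ.symm (Function.update (Φ a) j y) i' = a i' := by
    intro j y i' hi'
    have := hg j y i' hi'
    rwa [hΦsb] at this
  have gf : ∀ i, g (f i) = i := by
    intro i
    by_contra hne
    haveI := (hGs i).2.1
    obtain ⟨x, hx⟩ := exists_ne (a i)
    have hform : Function.update (Φ a) (f i) (Φ (Function.update a i x) (f i))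
        = Φ (Function.update a i x) := by
      funext j'
      rcases eq_or_ne j' (f i) with rfl | hj'
      · rw [Function.update_self]
      · rw [Function.update_of_ne hj', hf i x j' hj']
    have h2 := hg' (f i) (Φ (Function.update a i x) (f i)) i (Ne.symm hne)
    rw [hform, Φ.symm_apply_apply] at h2
    rw [Function.update_self] at h2
    exact hx h2
  have fg : ∀ j, f (g j) = j := by
    intro j
    by_contra hne
    haveI := (hHs j).2.1
    obtain ⟨y, hy⟩ := exists_ne (Φ a j)
    have hform : Function.update a (g j) (Φ.symm (Function.update (Φ a) j y) (g j))
        = Φ.symm (Function.update (Φ a) j y) := by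
      funext i'
      rcases eq_or_ne i' (g j) with rfl | hi'
      · rw [Function.update_self]
      · rw [Function.update_of_ne hi', hg' j y i' hi']
    have h2 := hf (g j) (Φ.symm (Function.update (Φ a) j y) (g j)) j (Ne.symm hne)
    rw [hform, Φ.apply_symm_apply] at h2
    rw [Function.update_self] at h2
    exact hy h2
  let fE : Fin k ≃ Fin l := ⟨f, g, gf, fg⟩
  have hkl : k = l := by
    have := Fintype.card_congr fE
    simpa using this
  refine ⟨hkl, fE.trans (finCongr hkl.symm), fun i => ?_⟩
  have hcast : Fin.cast hkl ((fE.trans (finCongr hkl.symm)) i) = f i := by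
    apply Fin.ext
    simp [fE]
  rw [hcast]
  -- build the isomorphism Gs i ≅ Hs (f i)
  haveI := (hGs i).2.1
  set θ : W i → X (f i) := fun x => Φ (Function.update a i x) (f i) with hθ
  have hθinj : Function.Injective θ := by
    intro x y hxy
    have hfull : Φ (Function.update a i x) = Φ (Function.update a i y) := by
      funext j'
      rcases eq_or_ne j' (f i) with rfl | hj'
      · exact hxy
      · rw [hf i x j' hj', hf i y j' hj']
    have := Φ.toEquiv.injective hfull
    have h3 := congrFun this i
    simpa using h3
  have hθsurj : Function.Surjective θ := by
    intro y
    have hu : ∀ i', i' ≠ i → Φ.symm (Function.update (Φ a) (f i) y) i' = a i' := by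
      intro i' hi'
      exact hg' (f i) y i' (by rw [gf i]; exact hi')
    refine ⟨Φ.symm (Function.update (Φ a) (f i) y) i, ?_⟩
    have hupd : Function.update a i (Φ.symm (Function.update (Φ a) (f i) y) i)
        = Φ.symm (Function.update (Φ a) (f i) y) := by
      funext i'
      rcases eq_or_ne i' i with rfl | hi'
      · rw [Function.update_self]
      · rw [Function.update_of_ne hi']
        exact (hu i' hi').symm
    show Φ (Function.update a i _) (f i) = y
    rw [hupd, Φ.apply_symm_apply, Function.update_self]
  have hθadj : ∀ x y, (Hs (f i)).Adj (θ x) (θ y) ↔ (Gs i).Adj x y := by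
    intro x y
    have h1 : (Gs i).Adj x y ↔
        (Digraph.prodFam Gs).Adj (Function.update a i x) (Function.update a i y) := by
      have h1' := Digraph.prodFam_adj_coord (K := Gs) (c := a) (j₀ := i)
        (u := Function.update a i x) (v := Function.update a i y) ha
        (fun t ht => Function.update_of_ne ht _ _) (fun t ht => Function.update_of_ne ht _ _)
      simp only [Function.update_self] at h1'
      exact h1'.symm
    have h2 : (Digraph.prodFam Hs).Adj (Φ (Function.update a i x)) (Φ (Function.update a i y))
        ↔ (Digraph.prodFam Gs).Adj (Function.update a i x) (Function.update a i y) :=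
      Φ.map_rel_iff
    have h3 : (Digraph.prodFam Hs).Adj (Φ (Function.update a i x)) (Φ (Function.update a i y))
        ↔ (Hs (f i)).Adj (θ x) (θ y) :=
      Digraph.prodFam_adj_coord (K := Hs) (c := Φ a) (j₀ := f i) hb (hf i x) (hf i y)
    exact h3.symm.trans (h2.trans h1.symm)
  exact ⟨⟨Equiv.ofBijective θ ⟨hθinj, hθsurj⟩, fun {x y} => hθadj x y⟩⟩
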